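/- For every γ ∈ (0,1) and every δ ∈ ℝ, the secular equation ((2-x)² - 4√(1-x)√(1-γx))/x + δ√x(√(1-x) - √(1-γx)) + δ²(1 - √(1-x)√(1-γx)) = 0 has exactly one solution x_R in (0,1). -/

import Mathlib

set_option maxHeartbeats 4000000
set_option maxRecDepth 100000

open Real Set Filter Topology

private lemma certK1 {s r : ℝ} (hs : 0 < s) (hsr : s < r) (hr : r < 1) :
    0 < 68*s^4*r^3 - 4*s^7 - 8*s^2*r^3 - 96*s^3*r^2 - 44*s^4*r + 20*s^5 + 4*r^3 - 32*s*r^2 + 88*s^2*r + 4*s^3 + 20*r - 20*s := by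
  have h1 : 0 < r - s := by linarith
  have h2 : 0 < 1 - r := by linarith
  have h3 : 0 < 1 - s := by linarith
  have h4 : 0 < r := by linarith
  linarith [(mul_pos (mul_pos h2 h3) (pow_pos h4 3)), (mul_pos (pow_pos h2 3) (pow_pos h4 4)), (mul_pos (mul_pos (pow_pos h2 3) h3) (pow_pos h4 3)), (mul_pos h1 (pow_pos h3 4)), (mul_pos h1 (pow_pos h3 6)), (mul_pos h1 h2), (mul_pos (mul_pos h1 h2) (pow_pos h4 5)), (mul_pos (mul_pos h1 (pow_pos h2 4)) h4), (mul_pos (mul_pos h1 (pow_pos h2 4)) h3), (mul_pos (pow_pos h1 2) (pow_pos h2 3)), (mul_pos (pow_pos h1 3) (pow_pos h4 4)), (mul_pos (mul_pos (pow_pos h1 3) h2) h4), (mul_pos (pow_pos h1 3) (pow_pos h2 4)), (mul_pos (mul_pos (pow_pos h1 4) (pow_pos h3 2)) h4), (mul_pos (pow_pos h1 6) h3), (mul_pos (pow_pos h1 6) h2), (mul_pos (mul_pos hs (pow_pos h3 2)) (pow_pos h4 4)), (mul_pos (mul_pos (mul_pos hs h1) h2) (pow_pos h4 4)), (mul_pos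 (mul_pos (mul_pos hs h1) (pow_pos h2 3)) (pow_pos h3 2)), (mul_pos (mul_pos hs (pow_pos h1 3)) (pow_pos h3 3)), (mul_pos (mul_pos (pow_pos hs 2) (pow_pos h3 3)) (pow_pos h4 2)), (mul_pos (mul_pos (pow_pos hs 2) (pow_pos h2 2)) (pow_pos h4 3)), (mul_pos (pow_pos hs 2) (pow_pos h1 5)), (mul_pos (mul_pos (pow_pos hs 3) h1) (pow_pos h2 3)), (mul_pos (pow_pos hs 4) (pow_pos h3 2)), (mul_pos (pow_pos hs 4) (pow_pos h3 3)), (mul_pos (mul_pos (pow_pos hs 4) h2) h3), (mul_pos (mul_pos (mul_pos (pow_pos hs 4) h1) h2) h4), (mul_pos (pow_pos hs 4) (pow_pos h1 3)), (mul_pos (pow_pos hs 5) (pow_pos h2 2))]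

private lemma certK2 {s r : ℝ} (hs : 0 < s) (hsr : s < r) (hr : r < 1) :
    0 < 1152*s^6*r^4 - 144*s^9*r - 192*s^4*r^4 - 1152*s^5*r^3 - 1152*s^6*r^2 + 384*s^7*r + 144*s^8 - 768*s^3*r^3 + 1344*s^4*r^2 + 480*s^5*r - 192*s^6 + 64*r^4 - 128*s*r^3 + 768*s^2*r^2 - 512*s^3*r - 32*s^4 + 64*r^2 - 208*s*r + 64*s^2 + 16 := by
  have h1 : 0 < r - s := by linarith
  have h2 : 0 < 1 - r := by linarith
  have h3 : 0 < 1 - s := by linarith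
  have h4 : 0 < r := by linarith
  linarith [(pow_pos h3 2), (mul_pos h2 (pow_pos h3 4)), (mul_pos (pow_pos h2 2) (pow_pos h4 6)), (mul_pos (mul_pos (pow_pos h2 2) (pow_pos h3 4)) (pow_pos h4 4)), (mul_pos (mul_pos (pow_pos h2 2) (pow_pos h3 6)) (pow_pos h4 2)), (mul_pos (pow_pos h2 5) (pow_pos h4 5)), (mul_pos (mul_pos (pow_pos h2 5) h3) (pow_pos h4 3)), (mul_pos (mul_pos (pow_pos h2 5) (pow_pos h3 3)) (pow_pos h4 2)), (mul_pos (pow_pos h2 7) (pow_pos h4 3)), (pow_pos h2 9), (mul_pos (pow_pos h2 9) h4), (mul_pos (mul_pos h1 h2) (pow_pos h4 2)), (mul_pos (mul_pos h1 h2) (pow_pos h4 8)), (mul_pos (mul_pos h1 h2) (pow_pos h3 5)), (mul_pos h1 (pow_pos h2 6)), (mul_pos (mul_pos (pow_pos h1 2) h2) (pow_pos h4 5)), (mul_pos (pow_pos h1 2) (pow_pos h2 2)), (mul_pos (pow_pos h1 2) (pow_pos h2 8)), (mul_pos (pow_pos h1 3) (pow_pos h3 7)), (mul_pos (mul_pos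 (pow_pos h1 3) h2) (pow_pos h4 6)), (mul_pos (mul_pos (pow_pos h1 3) h2) (pow_pos h3 6)), (mul_pos (pow_pos h1 4) (pow_pos h2 2)), (mul_pos (mul_pos (pow_pos h1 5) (pow_pos h2 2)) (pow_pos h4 3)), (mul_pos (pow_pos h1 5) (pow_pos h2 5)), (mul_pos (pow_pos h1 6) (pow_pos h4 4)), (mul_pos (pow_pos h1 6) h2), (mul_pos (pow_pos h1 8) h2), (mul_pos (mul_pos (pow_pos h1 8) h2) h4), (pow_pos h1 10), (mul_pos hs (pow_pos h3 5)), (mul_pos hs (pow_pos h3 9)), (mul_pos (mul_pos (mul_pos hs h2) h3) (pow_pos h4 6)), (mul_pos hs (pow_pos h2 4)), (mul_pos (mul_pos hs (pow_pos h2 4)) (pow_pos h4 5)), (mul_pos (mul_pos hs (pow_pos h2 7)) (pow_pos h3 2)), (mul_pos (mul_pos hs h1) h2), (mul_pos hs (pow_pos h1 4)), (mul_pos hs (pow_pos h1 6)), (mul_pos (mul_pos hs (pow_pos h1 7)) (pow_pos h3 2)), (mul_pos (mul_pos (pow_pos hs 2) (pow_pos h3 2)) (pow_pos h4 6)), (mul_pos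 (mul_pos (pow_pos hs 2) (pow_pos h3 6)) (pow_pos h4 2)), (mul_pos (mul_pos (pow_pos hs 2) (pow_pos h2 2)) (pow_pos h3 6)), (mul_pos (mul_pos (pow_pos hs 2) h1) (pow_pos h2 7)), (mul_pos (mul_pos (pow_pos hs 2) (pow_pos h1 2)) (pow_pos h3 6)), (mul_pos (pow_pos hs 2) (pow_pos h1 7)), (mul_pos (pow_pos hs 2) (pow_pos h1 8)), (mul_pos (pow_pos hs 3) (pow_pos h3 6)), (mul_pos (mul_pos (pow_pos hs 3) (pow_pos h2 3)) (pow_pos h4 4)), (mul_pos (mul_pos (pow_pos hs 3) (pow_pos h2 6)) h3), (mul_pos (mul_pos (mul_pos (pow_pos hs 3) h1) h3) (pow_pos h4 5)), (mul_pos (mul_pos (pow_pos hs 3) (pow_pos h1 4)) (pow_pos h3 3)), (mul_pos (mul_pos (pow_pos hs 4) (pow_pos h3 2)) h4), (mul_pos (pow_pos hs 4) (pow_pos h3 6)), (mul_pos (mul_pos (mul_pos (pow_pos hs 4) h2) h3) (pow_pos h4 4)), (mul_pos (mul_pos (pow_pos hs 4) h1) h2), (mul_pos (mul_pos (pow_pos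 hs 5) (pow_pos h2 2)) (pow_pos h3 3)), (mul_pos (mul_pos (pow_pos hs 6) (pow_pos h2 3)) h4), (mul_pos (pow_pos hs 6) (pow_pos h1 3)), (mul_pos (pow_pos hs 6) (pow_pos h1 4)), (mul_pos (pow_pos hs 7) (pow_pos h3 2)), (mul_pos (pow_pos hs 7) (pow_pos h3 3)), (mul_pos (mul_pos (pow_pos hs 7) (pow_pos h2 2)) h4), (mul_pos (mul_pos (pow_pos hs 7) h1) (pow_pos h2 2))]

private lemma pos_of_mul_eq {X A B : ℝ} (h : X*A = B) (hA : 0 < A) (hB : 0 < B) : 0 < X := by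
  by_contra hc
  push_neg at hc
  nlinarith

private lemma quad_aux {A B C P Q d : ℝ} (hA : 0 < A) (hq : A*d^2 + B*d + C = 0)
    (hI : 0 < 2*A*P - Q*B) (hII : 0 < A*P^2 - B*P*Q + C*Q^2) : 0 < P + d*Q := by
  by_contra hc
  push_neg at hc
  have ht : 0 ≤ -(P + d*Q) := by linarith
  have hkey : Q^2*(A*d^2 + B*d + C) = 0 := by rw [hq, mul_zero]
  nlinarith [mul_nonneg ht hI.le, mul_nonneg (mul_nonneg hA.le ht) ht, hkey, hII]

private lemma slope_pos_right {f : ℝ → ℝ} {a b L : ℝ} (hd : HasDerivAt f L a) (hL : 0 < L)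
    (hfa : f a = 0) (hab : a < b) : ∃ t, t ∈ Set.Ioo a b ∧ 0 < f t := by
  have hs := hasDerivAt_iff_tendsto_slope.mp hd
  have hev : ∀ᶠ y in 𝓝[≠] a, 0 < slope f a y := hs.eventually (lt_mem_nhds hL)
  have hsub : 𝓝[>] a ≤ 𝓝[≠] a :=
    nhdsWithin_mono a (fun y hy => Set.mem_compl_singleton_iff.mpr (ne_of_gt hy))
  have hmem' : ∀ᶠ y in 𝓝[>] a, y ∈ Set.Ioo a b := by
    filter_upwards [Ioo_mem_nhdsGT hab] with y hy using hy
  obtain ⟨t, ht1, ht2⟩ := ((hev.filter_mono hsub).and hmem').exists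
  refine ⟨t, ht2, ?_⟩
  rw [slope_def_field, hfa, sub_zero] at ht1
  rcases div_pos_iff.mp ht1 with h | h
  · exact h.1
  · exfalso; have := ht2.1; linarith [h.2]

private lemma slope_neg_left {f : ℝ → ℝ} {a b L : ℝ} (hd : HasDerivAt f L b) (hL : 0 < L)
    (hfb : f b = 0) (hab : a < b) : ∃ t, t ∈ Set.Ioo a b ∧ f t < 0 := by
  have hs := hasDerivAt_iff_tendsto_slope.mp hd
  have hev : ∀ᶠ y in 𝓝[≠] b, 0 < slope f b y := hs.eventually (lt_mem_nhds hL)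
  have hsub : 𝓝[<] b ≤ 𝓝[≠] b :=
    nhdsWithin_mono b (fun y hy => Set.mem_compl_singleton_iff.mpr (ne_of_lt hy))
  have hmem' : ∀ᶠ y in 𝓝[<] b, y ∈ Set.Ioo a b := by
    filter_upwards [Ioo_mem_nhdsLT hab] with y hy using hy
  obtain ⟨t, ht1, ht2⟩ := ((hev.filter_mono hsub).and hmem').exists
  refine ⟨t, ht2, ?_⟩
  rw [slope_def_field, hfb, sub_zero] at ht1
  rcases div_pos_iff.mp ht1 with h | h
  · exfalso; have := ht2.2; linarith [h.2]
  · exact h.1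

private noncomputable def Fg (γ δ : ℝ) : ℝ → ℝ := fun x =>
  ((2 - x)^2 - 4 * Real.sqrt (1 - x) * Real.sqrt (1 - γ*x)) / x
    + δ * Real.sqrt x * (Real.sqrt (1 - x) - Real.sqrt (1 - γ*x))
    + δ^2 * (1 - Real.sqrt (1 - x) * Real.sqrt (1 - γ*x))

private lemma Fg_contOn (γ δ : ℝ) : ContinuousOn (Fg γ δ) (Set.Ioo (0:ℝ) 1) := by
  have c1 : Continuous fun x : ℝ => Real.sqrt (1 - x) :=
    Real.continuous_sqrt.comp (continuous_const.sub continuous_id)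
  have c2 : Continuous fun x : ℝ => Real.sqrt (1 - γ*x) :=
    Real.continuous_sqrt.comp (continuous_const.sub (continuous_const.mul continuous_id))
  have cnum : Continuous fun x : ℝ => (2 - x)^2 - 4 * Real.sqrt (1 - x) * Real.sqrt (1 - γ*x) :=
    ((continuous_const.sub continuous_id).pow 2).sub ((continuous_const.mul c1).mul c2)
  have cT2 : Continuous fun x : ℝ =>
      δ * Real.sqrt x * (Real.sqrt (1 - x) - Real.sqrt (1 - γ*x)) :=
    (continuous_const.mul Real.continuous_sqrt).mul (c1.sub c2)
  have cT3 : Continuous fun x : ℝ =>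
      δ^2 * (1 - Real.sqrt (1 - x) * Real.sqrt (1 - γ*x)) :=
    continuous_const.mul (continuous_const.sub (c1.mul c2))
  unfold Fg
  exact ((cnum.continuousOn.div continuousOn_id (fun x hx => ne_of_gt hx.1)).add
    cT2.continuousOn).add cT3.continuousOn

private lemma deriv_pos (γ δ : ℝ) (hγ1 : 0 < γ) (hγ2 : γ < 1) {z : ℝ} (hz0 : 0 < z)
    (hz1 : z < 1) (hroot : Fg γ δ z = 0) : ∃ L, HasDerivAt (Fg γ δ) L z ∧ 0 < L := by
  have hroot' : ((2 - z)^2 - 4 * Real.sqrt (1 - z) * Real.sqrt (1 - γ*z)) / z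
      + δ * Real.sqrt z * (Real.sqrt (1 - z) - Real.sqrt (1 - γ*z))
      + δ^2 * (1 - Real.sqrt (1 - z) * Real.sqrt (1 - γ*z)) = 0 := hroot
  clear hroot
  have hz1' : (0:ℝ) < 1 - z := by linarith
  have hgz : (0:ℝ) < 1 - γ*z := by nlinarith
  have e3 : HasDerivAt (fun x : ℝ => 2 - x) (0 - 1) z :=
    (hasDerivAt_const z (2:ℝ)).sub (hasDerivAt_id' z)
  have e1 : HasDerivAt (fun x : ℝ => 1 - x) (0 - 1) z :=
    (hasDerivAt_const z (1:ℝ)).sub (hasDerivAt_id' z)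
  have e2 : HasDerivAt (fun x : ℝ => 1 - γ*x) (0 - (0 * z + γ * 1)) z :=
    (hasDerivAt_const z (1:ℝ)).sub ((hasDerivAt_const z γ).mul (hasDerivAt_id' z))
  have hS := e1.sqrt (ne_of_gt hz1')
  have hR := e2.sqrt (ne_of_gt hgz)
  have hP : HasDerivAt (fun x : ℝ => Real.sqrt x) (1/(2*Real.sqrt z)) z :=
    Real.hasDerivAt_sqrt (ne_of_gt hz0)
  have hN := (e3.pow 2).sub (((hasDerivAt_const z (4:ℝ)).mul hS).mul hR)
  have hT1 := hN.div (hasDerivAt_id' z) (ne_of_gt hz0)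
  have hT2 := ((hasDerivAt_const z δ).mul hP).mul (hS.sub hR)
  have hT3 := (hasDerivAt_const z (δ^2)).mul ((hasDerivAt_const z (1:ℝ)).sub (hS.mul hR))
  have hd := (hT1.add hT2).add hT3
  set s := Real.sqrt (1 - z) with hsdef
  set r := Real.sqrt (1 - γ*z) with hrdef
  set p := Real.sqrt z with hpdef
  have hs0 : 0 < s := by rw [hsdef]; exact Real.sqrt_pos.mpr hz1'
  have hr0 : 0 < r := by rw [hrdef]; exact Real.sqrt_pos.mpr hgz
  have hp0 : 0 < p := by rw [hpdef]; exact Real.sqrt_pos.mpr hz0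
  have hs2 : s^2 = 1 - z := by rw [hsdef]; exact Real.sq_sqrt hz1'.le
  have hr2 : r^2 = 1 - γ*z := by rw [hrdef]; exact Real.sq_sqrt hgz.le
  have hp2 : p^2 = z := by rw [hpdef]; exact Real.sq_sqrt hz0.le
  have hs1 : s < 1 := by nlinarith [hs2, hs0]
  have hr1 : r < 1 := by nlinarith [hr2, hr0, mul_pos hγ1 hz0]
  have hsr : s < r := by
    nlinarith [hs2, hr2, hs0, hr0, mul_pos hz0 (show (0:ℝ) < 1 - γ by linarith)]
  have hsr1 : s*r < 1 := by nlinarith [hs0, hr0, hs1, hr1]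
  have hfd : HasDerivAt (fun x : ℝ =>
      ((2 - x)^2 - 4 * Real.sqrt (1 - x) * Real.sqrt (1 - γ*x)) / x
        + δ * Real.sqrt x * (Real.sqrt (1 - x) - Real.sqrt (1 - γ*x))
        + δ^2 * (1 - Real.sqrt (1 - x) * Real.sqrt (1 - γ*x)))
      ((4*s^2*p*z^2*γ*δ^2 + 4*r^2*p*z^2*δ^2 + 4*s*p^2*z^2*γ*δ - 4*r*p^2*z^2*δ - 4*s*r^2*z^2*δ + 4*s^2*r*z^2*δ + 8*s*r*p*z^2 + 16*s^2*p*z*γ + 32*s^2*r^2*p + 16*r^2*p*z - 32*s*r*p)/(8*s*r*p*z^2)) z := by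
    refine HasDerivAt.congr_deriv hd ?_
    simp only [Pi.mul_apply, Pi.sub_apply, Pi.pow_apply, ← hsdef, ← hrdef, ← hpdef]
    field_simp
    ring
  have hEv : (2 - z)^2 - 4*s*r + δ*(z*p*(s-r)) + δ^2*(z*(1-s*r)) = 0 := by
    have h2 : (2 - z)^2 - 4*s*r + δ*(z*p*(s-r)) + δ^2*(z*(1-s*r))
        = z * (((2 - z)^2 - 4*s*r)/z + δ*p*(s-r) + δ^2*(1-s*r)) := by
      field_simp
    rw [h2, hroot', mul_zero]
  have hAV : 0 < z*(1-s*r) := mul_pos hz0 (by linarith)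
  have hquad : (z*(1-s*r))*δ^2 + (z*p*(s-r))*δ + ((2-z)^2 - 4*s*r) = 0 := by
    linear_combination hEv
  have hIineq : (0:ℝ) < 2*(z*(1-s*r))*(p*(4*(r-s)*(s^5 - s^4*r - 8*s^3*r^2 + 2*s^3 + 6*s^2*r - 3*s + 3*r))) - (2*(1-s^2)^2*(r-s)*(2*s^2 - 2*s*r + 2*r^2 - 2))*(z*p*(s-r)) := by
    have eI : 2*(z*(1-s*r))*(p*(4*(r-s)*(s^5 - s^4*r - 8*s^3*r^2 + 2*s^3 + 6*s^2*r - 3*s + 3*r))) - (2*(1-s^2)^2*(r-s)*(2*s^2 - 2*s*r + 2*r^2 - 2))*(z*p*(s-r))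
        = z*p*((r-s)*(68*s^4*r^3 - 4*s^7 - 8*s^2*r^3 - 96*s^3*r^2 - 44*s^4*r + 20*s^5 + 4*r^3 - 32*s*r^2 + 88*s^2*r + 4*s^3 + 20*r - 20*s)) := by ring
    rw [eI]
    exact mul_pos (mul_pos hz0 hp0)
      (mul_pos (by linarith) (certK1 hs0 hsr hr1))
  have hIIineq : (0:ℝ) < (z*(1-s*r))*(p*(4*(r-s)*(s^5 - s^4*r - 8*s^3*r^2 + 2*s^3 + 6*s^2*r - 3*s + 3*r)))^2 - (z*p*(s-r))*(p*(4*(r-s)*(s^5 - s^4*r - 8*s^3*r^2 + 2*s^3 + 6*s^2*r - 3*s + 3*r)))*(2*(1-s^2)^2*(r-s)*(2*s^2 - 2*s*r + 2*r^2 - 2))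
      + ((2-z)^2 - 4*s*r)*(2*(1-s^2)^2*(r-s)*(2*s^2 - 2*s*r + 2*r^2 - 2))^2 := by
    have eII : (z*(1-s*r))*(p*(4*(r-s)*(s^5 - s^4*r - 8*s^3*r^2 + 2*s^3 + 6*s^2*r - 3*s + 3*r)))^2 - (z*p*(s-r))*(p*(4*(r-s)*(s^5 - s^4*r - 8*s^3*r^2 + 2*s^3 + 6*s^2*r - 3*s + 3*r)))*(2*(1-s^2)^2*(r-s)*(2*s^2 - 2*s*r + 2*r^2 - 2))
        + ((2-z)^2 - 4*s*r)*(2*(1-s^2)^2*(r-s)*(2*s^2 - 2*s*r + 2*r^2 - 2))^2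
        = z^2*((1-s*r)*((r-s)^2*(1152*s^6*r^4 - 144*s^9*r - 192*s^4*r^4 - 1152*s^5*r^3 - 1152*s^6*r^2 + 384*s^7*r + 144*s^8 - 768*s^3*r^3 + 1344*s^4*r^2 + 480*s^5*r - 192*s^6 + 64*r^4 - 128*s*r^3 + 768*s^2*r^2 - 512*s^3*r - 32*s^4 + 64*r^2 - 208*s*r + 64*s^2 + 16))) := by
      linear_combination (- 1152*s^7*r^7*z + 2288*s^8*r^6*z - 1088*s^9*r^5*z + 16*s^10*r^4*z - 128*s^11*r^3*z + 16*s^12*r^2*z + 64*s^13*r*z - 16*s^14*z + 256*s^5*r^7*z + 1664*s^6*r^6*z - 2752*s^7*r^5*z - 992*s^8*r^4*z + 2048*s^9*r^3*z + 64*s^10*r^2*z - 320*s^11*r*z + 32*s^12*z - 128*s^3*r^7*z + 1120*s^4*r^6*z - 4928*s^5*r^5*z + 5856*s^6*r^4*z - 512*s^7*r^3*z - 1504*s^8*r^2*z - 64*s^9*r*z + 160*s^10*z - 1088*s^3*r^5*z + 3584*s^4*r^4*z - 2944*s^5*r^3*z - 768*s^6*r^2*z + 1472*s^7*r*z - 256*s^8*z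 + 48*r^6*z - 384*s*r^5*z + 1680*s^2*r^4*z - 3200*s^3*r^3*z + 2640*s^4*r^2*z - 768*s^5*r*z - 16*s^6*z + 96*r^4*z - 384*s*r^3*z + 576*s^2*r^2*z - 384*s^3*r*z + 96*s^4*z)*hp2 + (- 64*s^7*r^7 + 256*s^8*r^6 - 512*s^9*r^5 + 640*s^10*r^4 - 512*s^11*r^3 + 256*s^12*r^2 - 64*s^13*r + 64*s^5*r^7*z - 320*s^6*r^6*z + 768*s^7*r^5*z - 1152*s^8*r^4*z + 1152*s^9*r^3*z - 768*s^10*r^2*z + 320*s^11*r*z - 64*s^12*z + 192*s^5*r^7 - 704*s^6*r^6 + 1408*s^7*r^5 - 1792*s^8*r^4 + 1408*s^9*r^3 - 640*s^10*r^2 + 64*s^11*r + 64*s^12 - 128*s^3*r^7*z + 640*s^4*r^6*z - 1664*s^5*r^5*z + 2816*s^6*r^4*z - 3200*s^7*r^3*z + 2432*s^8*r^2*z - 1152*s^9*r*z + 256*s^10*z - 192*s^3*r^7 + 576*s^4*r^6 - 1152*s^5*r^5 + 1408*s^6*r^4 - 832*s^7*r^3 + 512*s^9*r - 320*s^10 +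 64*s*r^7*z - 320*s^2*r^6*z + 1024*s^3*r^5*z - 2176*s^4*r^4*z + 3008*s^5*r^3*z - 2752*s^6*r^2*z + 1536*s^7*r*z - 384*s^8*z + 64*s*r^7 - 64*s^2*r^6 + 128*s^3*r^5 + 128*s^4*r^4 - 832*s^5*r^3 + 1344*s^6*r^2 - 1408*s^7*r + 640*s^8 - 128*s*r^5*z + 512*s^2*r^4*z - 1024*s^3*r^3*z + 1280*s^4*r^2*z - 896*s^5*r*z + 256*s^6*z - 64*r^6 + 128*s*r^5 - 512*s^2*r^4 + 1088*s^3*r^3 - 1472*s^4*r^2 + 1472*s^5*r - 640*s^6 + 64*s*r^3*z - 192*s^2*r^2*z + 192*s^3*r*z - 64*s^4*z + 128*r^4 - 320*s*r^3 + 576*s^2*r^2 - 704*s^3*r + 320*s^4 - 64*r^2 + 128*s*r - 64*s^2)*hs2 + (0)*hr2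
    rw [eII]
    exact mul_pos (pow_pos hz0 2) (mul_pos (by linarith)
      (mul_pos (pow_pos (by linarith : (0:ℝ) < r - s) 2) (certK2 hs0 hsr hr1)))
  have hPQ : 0 < (p*(4*(r-s)*(s^5 - s^4*r - 8*s^3*r^2 + 2*s^3 + 6*s^2*r - 3*s + 3*r))) + δ*(2*(1-s^2)^2*(r-s)*(2*s^2 - 2*s*r + 2*r^2 - 2)) := quad_aux hAV hquad hIineq hIIineq
  have hmain : (4*s^2*p*z^2*γ*δ^2 + 4*r^2*p*z^2*δ^2 + 4*s*p^2*z^2*γ*δ - 4*r*p^2*z^2*δ - 4*s*r^2*z^2*δ + 4*s^2*r*z^2*δ + 8*s*r*p*z^2 + 16*s^2*p*z*γ + 32*s^2*r^2*p + 16*r^2*p*z - 32*s*r*p)*((1-s*r)*p*(8*s*r*(1-s^2)^2))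
      = 8*s*r*p*z^2*((p*(4*(r-s)*(s^5 - s^4*r - 8*s^3*r^2 + 2*s^3 + 6*s^2*r - 3*s + 3*r))) + δ*(2*(1-s^2)^2*(r-s)*(2*s^2 - 2*s*r + 2*r^2 - 2))) := by
    linear_combination (32*s^7*r*p^2*z*γ + 32*s^5*r^3*p^2*z - 64*s^5*r*p^2*z*γ - 64*s^3*r^3*p^2*z + 32*s^3*r*p^2*z*γ + 32*s*r^3*p^2*z)*hEv + (- 32*s^8*r*p*z^2*γ*δ + 32*s^5*r^4*p*z^2*δ + 96*s^6*r*p*z^2*γ*δ - 32*s^7*r*z^3*γ - 64*s^7*r^3*z^2 - 256*s^8*r^4 - 64*s^3*r^4*p*z^2*δ - 32*s^5*r^2*p*z^2*δ - 32*s^5*r^3*z^3 + 128*s^7*r*z^2*γ - 96*s^4*r*p*z^2*γ*δ + 256*s^4*r^4*z^2 + 64*s^5*r*z^3*γ + 32*s^5*r^3*z^2 + 512*s^6*r^4 + 32*s^7*r*z^2 + 512*s^7*r^3 + 32*s*r^4*p*z^2*δ + 64*s^3*r^2*p*z^2*δ + 64*s^3*r^3*z^3 - 256*s^5*r*z^2*γ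 + 32*s^2*r*p*z^2*γ*δ - 32*s^3*r*z^3*γ - 512*s^3*r^3*z^2 - 256*s^4*r^4 + 64*s^5*r*z^2 - 1024*s^5*r^3 - 256*s^6*r^2 - 32*s*r^2*p*z^2*δ - 32*s*r^3*z^3 + 128*s^3*r*z^2*γ + 32*s*r^3*z^2 + 256*s^2*r^2*z^2 - 96*s^3*r*z^2 + 512*s^3*r^3 + 512*s^4*r^2 - 256*s^2*r^2)*hp2 + (32*s^5*r^4*p*z^2*δ - 32*s^6*r*p*z^3*γ*δ - 32*s^6*r^3*p*z^2*δ + 32*s^4*r*p*z^4*γ*δ + 32*s^4*r^3*p*z^3*δ - 32*s^2*r*p*z^5*γ*δ - 32*s^2*r^3*p*z^4*δ - 64*s^3*r^4*p*z^2*δ + 64*s^4*r*p*z^3*γ*δ + 64*s^4*r^3*p*z^2*δ - 32*s^5*r*z^4*γ - 32*s^5*r^2*p*z^2*δ - 64*s^5*r^3*z^3 + 32*s^6*r*p*z^2*δ - 256*s^6*r^4*z + 32*r*p*z^6*γ*δ + 32*r^3*p*z^5*δ - 32*s^2*r*p*z^4*γ*δ - 32*s^2*r^3*p*z^3*δ +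 32*s^3*r*z^5*γ + 32*s^3*r^3*z^4 - 32*s^4*r*p*z^3*δ + 256*s^4*r^4*z^2 + 128*s^5*r*z^3*γ - 32*s*r*z^6*γ - 32*s*r^3*z^5 + 32*s*r^4*p*z^2*δ - 32*s^2*r*p*z^3*γ*δ + 32*s^2*r*p*z^4*δ - 32*s^2*r^3*p*z^2*δ - 96*s^3*r*z^4*γ + 64*s^3*r^2*p*z^2*δ - 32*s^3*r^3*z^3 - 64*s^4*r*p*z^2*δ + 256*s^4*r^4*z + 32*s^5*r*z^3 + 512*s^5*r^3*z - 32*r*p*z^5*δ + 128*s*r*z^5*γ + 128*s*r^3*z^4 + 32*s^2*r*p*z^3*δ - 128*s^3*r*z^3*γ - 32*s^3*r*z^4 - 512*s^3*r^3*z^2 + 32*s*r*z^5 - 32*s*r^2*p*z^2*δ - 32*s*r^3*z^3 + 32*s^2*r*p*z^2*δ + 96*s^3*r*z^3 - 512*s^3*r^3*z - 256*s^4*r^2*z - 128*s*r*z^4 + 256*s^2*r^2*z^2 + 256*s^2*r^2*z)*hs2 + (- 32*r*p*z^6*δ + 32*r*p*z^5*δ + 32*s*r*z^6 - 160*s*r*z^5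 + 128*s*r*z^4)*hr2
  have hdd : 0 < (1-s*r)*p*(8*s*r*(1-s^2)^2) := by
    have hDD : 0 < 8*s*r*(1-s^2)^2 :=
      mul_pos (mul_pos (mul_pos (by norm_num : (0:ℝ) < 8) hs0) hr0)
        (pow_pos (by nlinarith : (0:ℝ) < 1 - s^2) 2)
    exact mul_pos (mul_pos (by linarith) hp0) hDD
  have h8 : 0 < 8*s*r*p*z^2*((p*(4*(r-s)*(s^5 - s^4*r - 8*s^3*r^2 + 2*s^3 + 6*s^2*r - 3*s + 3*r))) + δ*(2*(1-s^2)^2*(r-s)*(2*s^2 - 2*s*r + 2*r^2 - 2))) :=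
    mul_pos (mul_pos (mul_pos (mul_pos (mul_pos (by norm_num : (0:ℝ) < 8) hs0) hr0) hp0)
      (pow_pos hz0 2)) hPQ
  have hLnum : 0 < 4*s^2*p*z^2*γ*δ^2 + 4*r^2*p*z^2*δ^2 + 4*s*p^2*z^2*γ*δ - 4*r*p^2*z^2*δ - 4*s*r^2*z^2*δ + 4*s^2*r*z^2*δ + 8*s*r*p*z^2 + 16*s^2*p*z*γ + 32*s^2*r^2*p + 16*r^2*p*z - 32*s*r*p := pos_of_mul_eq hmain hdd h8
  exact ⟨(4*s^2*p*z^2*γ*δ^2 + 4*r^2*p*z^2*δ^2 + 4*s*p^2*z^2*γ*δ - 4*r*p^2*z^2*δ - 4*s*r^2*z^2*δ + 4*s^2*r*z^2*δ + 8*s*r*p*z^2 + 16*s^2*p*z*γ + 32*s^2*r^2*p + 16*r^2*p*z - 32*s*r*p)/(8*s*r*p*z^2), hfd,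
    div_pos hLnum (mul_pos (mul_pos (mul_pos (mul_pos (by norm_num : (0:ℝ) < 8) hs0) hr0) hp0)
      (pow_pos hz0 2))⟩

private lemma no_two_roots (γ δ : ℝ) (hγ1 : 0 < γ) (hγ2 : γ < 1) {a b : ℝ}
    (ha : a ∈ Set.Ioo (0:ℝ) 1) (hb : b ∈ Set.Ioo (0:ℝ) 1) (hab : a < b)
    (hfa : Fg γ δ a = 0) (hfb : Fg γ δ b = 0) : False := by
  obtain ⟨La, hda, hLa⟩ := deriv_pos γ δ hγ1 hγ2 ha.1 ha.2 hfa
  obtain ⟨Lb, hdb, hLb⟩ := deriv_pos γ δ hγ1 hγ2 hb.1 hb.2 hfb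
  obtain ⟨t, htab, htpos⟩ := slope_pos_right hda hLa hfa hab
  obtain ⟨u, hutb, huneg⟩ := slope_neg_left hdb hLb hfb htab.2
  have htu : t < u := hutb.1
  have hIccsub : Set.Icc t u ⊆ Set.Ioo (0:ℝ) 1 := by
    intro w hw
    constructor
    · have := htab.1; have := ha.1; have := hw.1; linarith
    · have := hutb.2; have := hb.2; have := hw.2; linarith
  have hcont : ContinuousOn (Fg γ δ) (Set.Icc t u) := (Fg_contOn γ δ).mono hIccsub
  set S := Set.Icc t u ∩ (Fg γ δ) ⁻¹' Set.Iic 0 with hSdef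
  have hSclosed : IsClosed S := hcont.preimage_isClosed_of_isClosed isClosed_Icc isClosed_Iic
  have hScomp : IsCompact S := isCompact_Icc.of_isClosed_subset hSclosed Set.inter_subset_left
  have hSne : S.Nonempty := ⟨u, ⟨⟨le_of_lt htu, le_refl u⟩, le_of_lt huneg⟩⟩
  have hc := hScomp.sInf_mem hSne
  set c := sInf S with hcdef
  have hcIcc : c ∈ Set.Icc t u := hc.1
  have hcF : Fg γ δ c ≤ 0 := hc.2
  have hct : t < c := by
    rcases lt_or_eq_of_le hcIcc.1 with h | h
    · exact h
    · exfalso; rw [← h] at hcF; linarith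
  have hpos : ∀ w ∈ Set.Ico t c, 0 < Fg γ δ w := by
    intro w hw
    by_contra hζ
    push_neg at hζ
    have hwS : w ∈ S := ⟨⟨hw.1, le_trans hw.2.le hcIcc.2⟩, hζ⟩
    have := csInf_le hScomp.bddBelow hwS
    have := hw.2
    simp only [← hcdef] at *
    linarith
  have hc0 : Fg γ δ c = 0 := by
    rcases lt_or_eq_of_le hcF with hlt | heq
    · exfalso
      have hsubIcc : Set.Icc t c ⊆ Set.Icc t u := Set.Icc_subset_Icc le_rfl hcIcc.2
      obtain ⟨w, hwmem, hww⟩ :=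
        intermediate_value_Ioo' hct.le (hcont.mono hsubIcc) ⟨hlt, htpos⟩
      exact (hpos w ⟨hwmem.1.le, hwmem.2⟩).ne' hww
    · exact heq
  have hcIoo : c ∈ Set.Ioo (0:ℝ) 1 := hIccsub hcIcc
  obtain ⟨Lc, hdc, hLc⟩ := deriv_pos γ δ hγ1 hγ2 hcIoo.1 hcIoo.2 hc0
  obtain ⟨w, hwm, hwneg⟩ := slope_neg_left hdc hLc hc0 hct
  exact absurd hwneg (not_lt.mpr (hpos w ⟨hwm.1.le, hwm.2⟩).le)

theorem stmt_9 (γ δ : ℝ) (hγ1 : 0 < γ) (hγ2 : γ < 1) :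
    ∃! x_R : ℝ, x_R ∈ Set.Ioo (0:ℝ) 1 ∧
      ((2 - x_R)^2 - 4 * Real.sqrt (1 - x_R) * Real.sqrt (1 - γ*x_R)) / x_R
        + δ * Real.sqrt x_R * (Real.sqrt (1 - x_R) - Real.sqrt (1 - γ*x_R))
        + δ^2 * (1 - Real.sqrt (1 - x_R) * Real.sqrt (1 - γ*x_R)) = 0 := by
  have hden : ∀ x : ℝ, 0 < 1 + Real.sqrt (1-x) * Real.sqrt (1-γ*x) := by
    intro x
    have := Real.sqrt_nonneg (1-x)
    have := Real.sqrt_nonneg (1-γ*x)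
    nlinarith
  have c1 : Continuous fun x : ℝ => Real.sqrt (1 - x) :=
    Real.continuous_sqrt.comp (continuous_const.sub continuous_id)
  have c2 : Continuous fun x : ℝ => Real.sqrt (1 - γ*x) :=
    Real.continuous_sqrt.comp (continuous_const.sub (continuous_const.mul continuous_id))
  set g : ℝ → ℝ := fun x => x - 4
      + 4*(1 + γ - γ*x)/(1 + Real.sqrt (1-x) * Real.sqrt (1-γ*x))
      + δ * Real.sqrt x * (Real.sqrt (1-x) - Real.sqrt (1-γ*x))
      + δ^2*(1 - Real.sqrt (1-x) * Real.sqrt (1-γ*x)) with hgdef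
  have hgc : ContinuousOn g (Set.Icc (0:ℝ) 1) := by
    apply Continuous.continuousOn
    rw [hgdef]
    refine (((continuous_id.sub continuous_const).add ?_).add
      ((continuous_const.mul Real.continuous_sqrt).mul (c1.sub c2))).add
      (continuous_const.mul (continuous_const.sub (c1.mul c2)))
    exact (continuous_const.mul ((continuous_const.add continuous_const).sub
      (continuous_const.mul continuous_id))).div
      (continuous_const.add (c1.mul c2)) (fun x => (hden x).ne')
  have hg0 : g 0 < 0 := by
    rw [hgdef]
    simp only
    norm_num [Real.sqrt_one]
    linarith
  have hg1 : 0 < g 1 := by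
    rw [hgdef]
    simp only
    have h1γ : (0:ℝ) ≤ 1 - γ := by linarith
    norm_num [Real.sqrt_one, Real.sqrt_zero]
    nlinarith [Real.sq_sqrt h1γ, Real.sqrt_nonneg (1-γ),
      sq_nonneg (δ - Real.sqrt (1-γ)/2)]
  obtain ⟨x₀, hx₀m, hgx₀⟩ := intermediate_value_Ioo (by norm_num : (0:ℝ) ≤ 1) hgc ⟨hg0, hg1⟩
  have hx0 : 0 < x₀ := hx₀m.1
  have hx1 : x₀ < 1 := hx₀m.2
  have hs2 : (Real.sqrt (1-x₀))^2 = 1 - x₀ := Real.sq_sqrt (by linarith)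
  have hr2 : (Real.sqrt (1-γ*x₀))^2 = 1 - γ*x₀ := Real.sq_sqrt (by nlinarith)
  have hFx₀ : Fg γ δ x₀ = 0 := by
    have h4 : 4*(1 + γ - γ*x₀)/(1 + Real.sqrt (1-x₀) * Real.sqrt (1-γ*x₀))
        = 4*(1 - Real.sqrt (1-x₀) * Real.sqrt (1-γ*x₀))/x₀ := by
      rw [div_eq_div_iff (hden x₀).ne' (ne_of_gt hx0)]
      linear_combination (4*(Real.sqrt (1-γ*x₀))^2)*hs2 + (4*(1-x₀))*hr2
    rw [← hgx₀, hgdef]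
    simp only [Fg]
    rw [h4]
    field_simp
    ring
  refine ⟨x₀, ⟨hx₀m, hFx₀⟩, ?_⟩
  rintro y ⟨hym, hy0⟩
  by_contra hne
  rcases lt_or_gt_of_ne hne with h | h
  · exact no_two_roots γ δ hγ1 hγ2 hym hx₀m h hy0 hFx₀
  · exact no_two_roots γ δ hγ1 hγ2 hx₀m hym h hFx₀ hy0
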